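/- For every real r, the Spin multiplication on the quaternions, defined by c ∘ z = c·z + 2r·(c₂·z₃ − c₃·z₂) where cₘ, zₘ denote the coefficients of the basis elements in c and z, has no zero divisors: if c ≠ 0 and c ∘ z = 0, then z = 0. -/

import Mathlib

open Quaternion

/-- The Spin multiplication `c ∘ z = c·z + 2r(c₂z₃ − c₃z₂)` on the quaternions. -/
noncomputable def spinMul (r : ℝ) (c z : ℍ[ℝ]) : ℍ[ℝ] :=
  c * z + ((2 * r * (c.imJ * z.imK - c.imK * z.imJ) : ℝ) : ℍ[ℝ])

/-- For every real `r`, the Spin multiplication has no zero divisors. -/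
theorem stmt5 (r : ℝ) (c z : ℍ[ℝ]) (hc : c ≠ 0) (h : spinMul r c z = 0) : z = 0 := by
  set s : ℝ := 2 * r * (c.imJ * z.imK - c.imK * z.imJ) with hs
  have h' : c * z = (↑(-s) : ℍ[ℝ]) := by
    unfold spinMul at h
    have := eq_neg_of_add_eq_zero_left h
    rw [this, hs, Quaternion.coe_neg]
  have hz : z = c⁻¹ * (↑(-s) : ℍ[ℝ]) := by
    rw [← h', ← mul_assoc, inv_mul_cancel₀ hc, one_mul]
  have hJ : z.imJ = (normSq c)⁻¹ * (-c.imJ) * (-s) := by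
    rw [hz, Quaternion.inv_def]
    simp [Quaternion.imJ_mul, Quaternion.imJ_smul]
    ring
  have hK : z.imK = (normSq c)⁻¹ * (-c.imK) * (-s) := by
    rw [hz, Quaternion.inv_def]
    simp [Quaternion.imK_mul, Quaternion.imK_smul]
    ring
  have hs0 : s = 0 := by
    have : s = 2 * r * (c.imJ * z.imK - c.imK * z.imJ) := hs
    rw [hJ, hK] at this
    nlinarith [this]
  rw [hs0] at h'
  simp only [neg_zero, Quaternion.coe_zero] at h'
  rcases mul_eq_zero.1 h' with h1 | h1
  · exact absurd h1 hc
  · exact h1
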